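/- For a ring R, every right ideal of R has a serial factorization if and only if either R is a right chain ring or R is isomorphic to a finite direct product of right duo right chain rings. -/

import Mathlib

open MulOpposite

universe u

/-- The product `A·B` of two right ideals of `R` (right ideals are `Rᵐᵒᵖ`-submodules of `R`):
the set of all finite sums of products `a * b` with `a ∈ A`, `b ∈ B`. -/
def rmul {R : Type u} [Ring R] (A B : Submodule Rᵐᵒᵖ R) : Submodule Rᵐᵒᵖ R :=
  Submodule.span Rᵐᵒᵖ {x : R | ∃ a ∈ A, ∃ b ∈ B, x = a * b}

/-- The product `A₁⋯Aₙ` of a (possibly empty) list of right ideals. -/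
def rprod {R : Type u} [Ring R] : List (Submodule Rᵐᵒᵖ R) → Submodule Rᵐᵒᵖ R
  | [] => ⊤
  | [A] => A
  | A :: l => rmul A (rprod l)

/-- A finite family of right ideals is coindependent if `Aᵢ + ⋂_{j ≠ i} Aⱼ = R` for every `i`. -/
def Coindep {R : Type u} [Ring R] {n : ℕ} (A : Fin n → Submodule Rᵐᵒᵖ R) : Prop :=
  ∀ i, A i ⊔ (⨅ j, ⨅ (_ : j ≠ i), A j) = ⊤

/-- A module is uniserial if its submodules are linearly ordered by inclusion. -/
def IsUniserialMod (S : Type*) [Ring S] (M : Type*) [AddCommGroup M] [Module S M] : Prop :=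
  ∀ N P : Submodule S M, N ≤ P ∨ P ≤ N

/-- A right ideal is a two-sided ideal if it is also closed under left multiplication. -/
def IsTwoSidedRid {R : Type u} [Ring R] (A : Submodule Rᵐᵒᵖ R) : Prop :=
  ∀ (r : R), ∀ x ∈ A, r * x ∈ A

/-- A serial factorization of a right ideal `A`: a factorization `A = A₁⋯Aₙ` into proper
right ideals that pairwise commute, form a coindependent family, and are such that every
quotient `R/Aᵢ` is a uniserial right `R`-module. -/
def IsSerialFact {R : Type u} [Ring R] {n : ℕ} (A : Submodule Rᵐᵒᵖ R)
    (F : Fin n → Submodule Rᵐᵒᵖ R) : Prop :=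
  (∀ i, F i ≠ ⊤) ∧ (∀ i j, rmul (F i) (F j) = rmul (F j) (F i)) ∧ Coindep F ∧
    (∀ i, IsUniserialMod Rᵐᵒᵖ (R ⧸ F i)) ∧ A = rprod (List.ofFn F)

/-- A right ideal has a serial factorization if it admits one of some length. -/
def HasSerialFact {R : Type u} [Ring R] (A : Submodule Rᵐᵒᵖ R) : Prop :=
  ∃ (n : ℕ) (F : Fin n → Submodule Rᵐᵒᵖ R), IsSerialFact A F

/-- A right chain ring: its right ideals are linearly ordered by inclusion. -/
def IsRightChainRing (R : Type u) [Ring R] : Prop :=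
  ∀ A B : Submodule Rᵐᵒᵖ R, A ≤ B ∨ B ≤ A

/-- A ring is right duo if every right ideal is a two-sided ideal. -/
def IsRightDuo (R : Type u) [Ring R] : Prop :=
  ∀ A : Submodule Rᵐᵒᵖ R, IsTwoSidedRid A

/-- The principal right ideal `rR`. -/
def rspan {R : Type u} [Ring R] (r : R) : Submodule Rᵐᵒᵖ R :=
  Submodule.span Rᵐᵒᵖ ({r} : Set R)


namespace SF
variable {R : Type u} [Ring R]

theorem rmul_le {A B C : Submodule Rᵐᵒᵖ R} (h : ∀ a ∈ A, ∀ b ∈ B, a * b ∈ C) : rmul A B ≤ C :=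
  Submodule.span_le.2 (by rintro x ⟨a, ha, b, hb, rfl⟩; exact h a ha b hb)

theorem rmul_le_left {A B : Submodule Rᵐᵒᵖ R} : rmul A B ≤ A :=
  rmul_le fun a ha b _ => A.smul_mem (op b) ha

theorem mul_mem_rmul {A B : Submodule Rᵐᵒᵖ R} {a b : R} (ha : a ∈ A) (hb : b ∈ B) :
    a * b ∈ rmul A B := Submodule.subset_span ⟨a, ha, b, hb, rfl⟩

theorem rmul_induction {A B : Submodule Rᵐᵒᵖ R} {p : R → Prop}
    (hgen : ∀ a ∈ A, ∀ b ∈ B, p (a * b)) (h0 : p 0)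
    (hadd : ∀ x y, p x → p y → p (x + y)) : ∀ x ∈ rmul A B, p x := by
  have hS : ∀ x ∈ rmul A B, x ∈ AddSubmonoid.closure {x : R | ∃ a ∈ A, ∃ b ∈ B, x = a * b} := by
    intro x hx
    let N : Submodule Rᵐᵒᵖ R :=
      { toAddSubmonoid := AddSubmonoid.closure {x : R | ∃ a ∈ A, ∃ b ∈ B, x = a * b}
        smul_mem' := by
          intro r x hx
          induction hx using AddSubmonoid.closure_induction with
          | mem y hy =>
            rcases hy with ⟨a, ha, b, hb, rfl⟩
            refine AddSubmonoid.subset_closure ⟨a, ha, b * r.unop, B.smul_mem r hb, ?_⟩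
            show a * b * r.unop = a * (b * r.unop)
            rw [mul_assoc]
          | zero => simpa using (AddSubmonoid.closure _).zero_mem
          | add y z _ _ ihy ihz => simpa [smul_add] using (AddSubmonoid.closure _).add_mem ihy ihz }
    have hle : rmul A B ≤ N := Submodule.span_le.2 fun y hy => AddSubmonoid.subset_closure hy
    exact hle hx
  intro x hx
  refine AddSubmonoid.closure_induction (motive := fun x _ => p x) ?_ h0 ?_ (hS x hx)
  · rintro y ⟨a, ha, b, hb, rfl⟩; exact hgen a ha b hb
  · intro y z _ _ ihy ihz; exact hadd y z ihy ihz

theorem rmul_assoc (A B C : Submodule Rᵐᵒᵖ R) : rmul (rmul A B) C = rmul A (rmul B C) := by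
  refine le_antisymm (rmul_le fun x hx c hc => ?_) (rmul_le fun a ha y hy => ?_)
  · refine rmul_induction (p := fun x => x * c ∈ rmul A (rmul B C)) ?_ ?_ ?_ x hx
    · intro a ha b hb
      rw [mul_assoc]
      exact mul_mem_rmul ha (mul_mem_rmul hb hc)
    · simp
    · intro x y hx hy; rw [add_mul]; exact Submodule.add_mem _ hx hy
  · refine rmul_induction (p := fun y => a * y ∈ rmul (rmul A B) C) ?_ ?_ ?_ y hy
    · intro b hb c hc
      rw [← mul_assoc]
      exact mul_mem_rmul (mul_mem_rmul ha hb) hc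
    · simp
    · intro x y hx hy; rw [mul_add]; exact Submodule.add_mem _ hx hy

theorem rmul_top (A : Submodule Rᵐᵒᵖ R) : rmul A ⊤ = A :=
  le_antisymm rmul_le_left fun a ha => by simpa using mul_mem_rmul ha (Submodule.mem_top (x := (1:R)))

theorem rprod_cons (A : Submodule Rᵐᵒᵖ R) (l : List (Submodule Rᵐᵒᵖ R)) :
    rprod (A :: l) = rmul A (rprod l) := by
  cases l with
  | nil => show A = rmul A ⊤; rw [rmul_top]
  | cons B l => rfl


theorem twoSided_rmul {A B : Submodule Rᵐᵒᵖ R} (hA : IsTwoSidedRid A) :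
    IsTwoSidedRid (rmul A B) := by
  intro r x hx
  refine rmul_induction (p := fun x => r * x ∈ rmul A B) ?_ ?_ ?_ x hx
  · intro a ha b hb; rw [← mul_assoc]; exact mul_mem_rmul (hA r a ha) hb
  · simp
  · intro x y hx hy; rw [mul_add]; exact Submodule.add_mem _ hx hy

theorem twoSided_of_comm {A B : Submodule Rᵐᵒᵖ R} (hsup : A ⊔ B = ⊤)
    (hcomm : rmul A B = rmul B A) : IsTwoSidedRid A := by
  intro r x hx
  obtain ⟨a, ha, c, hc, h1⟩ := Submodule.mem_sup.1 (hsup ▸ Submodule.mem_top (x := (1:R)))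
  have he : r * x = a * (r * x) + (c * r) * x := by
    rw [mul_assoc c r x, ← add_mul, h1, one_mul]
  rw [he]
  refine Submodule.add_mem _ (A.smul_mem (op (r*x)) ha) ?_
  have h2 : rmul B A ≤ A := hcomm ▸ rmul_le_left
  exact h2 (mul_mem_rmul (B.smul_mem (op r) hc) hx)

theorem inf_eq_rmul {A B : Submodule Rᵐᵒᵖ R} (hsup : A ⊔ B = ⊤)
    (hcomm : rmul A B = rmul B A) : A ⊓ B = rmul A B := by
  have h1 : rmul A B ≤ B := by rw [hcomm]; exact rmul_le_left
  refine le_antisymm ?_ (le_inf rmul_le_left h1)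
  rintro x ⟨hxA, hxB⟩
  obtain ⟨a, ha, c, hc, he⟩ := Submodule.mem_sup.1 (hsup ▸ Submodule.mem_top (x := (1:R)))
  have he2 : x = a * x + c * x := by rw [← add_mul, he, one_mul]
  rw [he2]
  refine Submodule.add_mem _ (mul_mem_rmul ha hxB) ?_
  rw [hcomm]
  exact mul_mem_rmul hc hxA

theorem rmul_rprod_comm (A : Submodule Rᵐᵒᵖ R) : ∀ (l : List (Submodule Rᵐᵒᵖ R)), l ≠ [] →
    (∀ B ∈ l, rmul A B = rmul B A) → rmul A (rprod l) = rmul (rprod l) A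
  | [], h, _ => absurd rfl h
  | [B], _, h => by
    have : rprod [B] = B := rfl
    rw [this]; exact h B (by simp)
  | B :: C :: l, _, h => by
    have hBC := rmul_rprod_comm A (C :: l) (by simp)
      (fun D hD => h D (List.mem_cons_of_mem _ hD))
    have hB := h B (by simp)
    rw [rprod_cons, ← rmul_assoc, hB, rmul_assoc, hBC, ← rmul_assoc]

theorem coindep_pair {n : ℕ} {F : Fin n → Submodule Rᵐᵒᵖ R} (h : Coindep F) {i j : Fin n}
    (hij : j ≠ i) : F i ⊔ F j = ⊤ :=
  top_unique <| (h i).ge.trans <| sup_le_sup_left (iInf_le_of_le j (iInf_le _ hij)) _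

theorem iInf_eq_rprod : ∀ {n : ℕ} (F : Fin n → Submodule Rᵐᵒᵖ R), Coindep F →
    (∀ i j, rmul (F i) (F j) = rmul (F j) (F i)) → (⨅ i, F i) = rprod (List.ofFn F)
  | 0, F, _, _ => by
    rw [List.ofFn_zero]
    exact le_antisymm le_top (le_iInf fun i => i.elim0)
  | (n+1), F, hco, hcomm => by
    set G : Fin n → Submodule Rᵐᵒᵖ R := fun i => F i.succ with hGdef
    have hiInf : (⨅ i, F i) = F 0 ⊓ ⨅ j, G j := by
      refine le_antisymm (le_inf (iInf_le _ 0) (le_iInf fun j => iInf_le _ j.succ)) (le_iInf fun i => ?_)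
      cases i using Fin.cases with
      | zero => exact inf_le_left
      | succ k => exact inf_le_right.trans (iInf_le _ k)
    have hinfG : (⨅ j, G j) = ⨅ j, ⨅ (_ : j ≠ (0 : Fin (n+1))), F j := by
      refine le_antisymm (le_iInf fun j => le_iInf fun hj => ?_)
        (le_iInf fun k => iInf_le_of_le k.succ (iInf_le _ (Fin.succ_ne_zero k)))
      obtain ⟨k, rfl⟩ : ∃ k : Fin n, k.succ = j := by
        cases j using Fin.cases with
        | zero => exact absurd rfl hj
        | succ k => exact ⟨k, rfl⟩
      exact iInf_le _ k
    cases n with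
    | zero =>
      rw [hiInf, List.ofFn_succ, List.ofFn_zero]
      have : (⨅ j, G j) = ⊤ := le_antisymm le_top (le_iInf fun i => i.elim0)
      rw [this, inf_top_eq]
      rfl
    | succ m =>
      have hGco : Coindep G := by
        intro i
        refine top_unique <| (hco i.succ).ge.trans <| sup_le_sup_left ?_ _
        refine le_iInf fun j => le_iInf fun hj => iInf_le_of_le j.succ ?_
        exact iInf_le _ (fun hh => hj (Fin.succ_injective _ hh))
      have IH := iInf_eq_rprod G hGco (fun i j => hcomm i.succ j.succ)
      have hne : List.ofFn G ≠ [] := by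
        rw [List.ofFn_succ]; exact List.cons_ne_nil _ _
      have hsup : F 0 ⊔ rprod (List.ofFn G) = ⊤ := by
        rw [← IH, hinfG]; exact hco 0
      have hcm : rmul (F 0) (rprod (List.ofFn G)) = rmul (rprod (List.ofFn G)) (F 0) := by
        refine rmul_rprod_comm _ _ hne fun B hB => ?_
        obtain ⟨k, rfl⟩ := List.mem_ofFn.1 hB
        exact hcomm 0 k.succ
      rw [hiInf, IH, inf_eq_rmul hsup hcm, hGdef]
      conv_rhs => rw [List.ofFn_succ, rprod_cons]

theorem crt_exists {n : ℕ} (F : Fin n → Submodule Rᵐᵒᵖ R) (hco : Coindep F) (x : Fin n → R) :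
    ∃ y : R, ∀ i, y - x i ∈ F i := by
  have hdec : ∀ i, ∃ c : R, c ∈ (⨅ j, ⨅ (_ : j ≠ i), F j) ∧ 1 - c ∈ F i := by
    intro i
    obtain ⟨a, ha, c, hc, h1⟩ := Submodule.mem_sup.1 ((hco i) ▸ Submodule.mem_top (x := (1:R)))
    exact ⟨c, hc, by rw [← h1]; simpa using ha⟩
  choose c hc1 hc2 using hdec
  refine ⟨∑ j, c j * x j, fun i => ?_⟩
  have he : (∑ j, c j * x j) - x i
      = (∑ j ∈ Finset.univ.erase i, c j * x j) + (-((1 - c i) * x i)) := by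
    rw [← Finset.sum_erase_add _ _ (Finset.mem_univ i), sub_mul, one_mul, neg_sub]
    abel
  rw [he]
  refine Submodule.add_mem _ (Submodule.sum_mem _ fun j hj => ?_) (Submodule.neg_mem _ ?_)
  · have hji : j ≠ i := (Finset.mem_erase.1 hj).1
    have hle : (⨅ k, ⨅ (_ : k ≠ j), F k) ≤ F i := iInf_le_of_le i (iInf_le _ (Ne.symm hji))
    exact (F i).smul_mem (op (x j)) (hle (hc1 j))
  · exact (F i).smul_mem (op (x i)) (hc2 i)

theorem uniserial_quot_iff (A : Submodule Rᵐᵒᵖ R) :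
    IsUniserialMod Rᵐᵒᵖ (R ⧸ A) ↔ ∀ P Q : Submodule Rᵐᵒᵖ R, A ≤ P → A ≤ Q → P ≤ Q ∨ Q ≤ P := by
  constructor
  · intro h P Q hP hQ
    have eP : Submodule.comap A.mkQ (P.map A.mkQ) = P := by
      rw [Submodule.comap_map_eq, Submodule.ker_mkQ, sup_eq_left.2 hP]
    have eQ : Submodule.comap A.mkQ (Q.map A.mkQ) = Q := by
      rw [Submodule.comap_map_eq, Submodule.ker_mkQ, sup_eq_left.2 hQ]
    rcases h (P.map A.mkQ) (Q.map A.mkQ) with hle | hle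
    · exact Or.inl (by rw [← eP, ← eQ]; exact Submodule.comap_mono hle)
    · exact Or.inr (by rw [← eP, ← eQ]; exact Submodule.comap_mono hle)
  · intro h N P
    have hA : ∀ T : Submodule Rᵐᵒᵖ (R ⧸ A), A ≤ Submodule.comap A.mkQ T := by
      intro T a ha
      show A.mkQ a ∈ T
      rw [Submodule.mkQ_apply, (Submodule.Quotient.mk_eq_zero A).2 ha]
      exact T.zero_mem
    have eN : (Submodule.comap A.mkQ N).map A.mkQ = N := by
      rw [Submodule.map_comap_eq, Submodule.range_mkQ, top_inf_eq]
    have eP : (Submodule.comap A.mkQ P).map A.mkQ = P := by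
      rw [Submodule.map_comap_eq, Submodule.range_mkQ, top_inf_eq]
    rcases h (Submodule.comap A.mkQ N) (Submodule.comap A.mkQ P) (hA N) (hA P) with hle | hle
    · exact Or.inl (by rw [← eN, ← eP]; exact Submodule.map_mono hle)
    · exact Or.inr (by rw [← eN, ← eP]; exact Submodule.map_mono hle)

def comapRid {S : Type*} [Ring S] (f : R →+* S) (T : Submodule Sᵐᵒᵖ S) :
    Submodule Rᵐᵒᵖ R where
  carrier := f ⁻¹' T
  add_mem' := by
    intro a b ha hb
    show f (a + b) ∈ T
    rw [map_add]; exact T.add_mem ha hb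
  zero_mem' := by show f 0 ∈ T; rw [map_zero]; exact T.zero_mem
  smul_mem' := by
    intro r x hx
    show f (x * r.unop) ∈ T
    rw [map_mul]
    exact T.smul_mem (op (f r.unop)) hx

theorem mem_comapRid {S : Type*} [Ring S] {f : R →+* S} {T : Submodule Sᵐᵒᵖ S} {x : R} :
    x ∈ comapRid f T ↔ f x ∈ T := Iff.rfl

def ridCon (A : Submodule Rᵐᵒᵖ R) (hA : IsTwoSidedRid A) : RingCon R where
  r x y := x - y ∈ A
  iseqv := ⟨fun x => by simp, fun h => by simpa using A.neg_mem h,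
    fun h1 h2 => by simpa using A.add_mem h1 h2⟩
  add' := fun {a b c d} h1 h2 => by simpa [add_sub_add_comm] using A.add_mem h1 h2
  mul' := fun {a b c d} h1 h2 => by
    show a * c - b * d ∈ A
    have he : a * c - b * d = (a - b) * c + b * (c - d) := by noncomm_ring
    rw [he]
    exact A.add_mem (A.smul_mem (op c) h1) (hA b _ h2)

theorem ridCon_mk'_surjective {A : Submodule Rᵐᵒᵖ R} (hA : IsTwoSidedRid A) :
    Function.Surjective (ridCon A hA).mk' :=
  fun y => Quotient.exists_rep y

theorem ridCon_eq {A : Submodule Rᵐᵒᵖ R} (hA : IsTwoSidedRid A) {x y : R} :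
    (ridCon A hA).mk' x = (ridCon A hA).mk' y ↔ x - y ∈ A := by
  exact Con.eq _

theorem ridCon_eq_zero {A : Submodule Rᵐᵒᵖ R} (hA : IsTwoSidedRid A) {x : R} :
    (ridCon A hA).mk' x = 0 ↔ x ∈ A := by
  have : (0 : (ridCon A hA).Quotient) = (ridCon A hA).mk' 0 := rfl
  rw [this, ridCon_eq, sub_zero]


theorem twoSided_rprod : ∀ l : List (Submodule Rᵐᵒᵖ R),
    (∀ A ∈ l, IsTwoSidedRid A) → IsTwoSidedRid (rprod l)
  | [], _ => fun r x _ => trivial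
  | A :: l, h => by
    rw [rprod_cons]
    exact twoSided_rmul (h A (by simp))

theorem le_of_comapRid_le {S : Type*} [Ring S] {f : R →+* S} (hf : Function.Surjective f)
    {T₁ T₂ : Submodule Sᵐᵒᵖ S} (h : comapRid f T₁ ≤ comapRid f T₂) : T₁ ≤ T₂ := by
  intro t ht
  obtain ⟨x, rfl⟩ := hf t
  exact mem_comapRid.1 (h (mem_comapRid.2 ht))

theorem forward {R : Type u} [Ring R] [Nontrivial R] (h : ∀ A : Submodule Rᵐᵒᵖ R, HasSerialFact A) :
    (IsRightChainRing R ∨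
      ∃ (k : ℕ) (S : Fin k → Type u) (inst : ∀ i, Ring (S i)),
        (∀ i, Nontrivial (S i)) ∧
        (∀ i, IsRightDuo (S i) ∧ IsRightChainRing (S i)) ∧
        Nonempty (R ≃+* ((i : Fin k) → S i))) := by
  obtain ⟨n, F, hne, hcomm, hco, huni, hbot⟩ := h ⊥
  match n, F, hne, hcomm, hco, huni, hbot with
  | 0, F, hne, hcomm, hco, huni, hbot =>
    exfalso
    rw [List.ofFn_zero] at hbot
    have h1 : (1:R) ∈ (⊥ : Submodule Rᵐᵒᵖ R) := by rw [hbot]; exact Submodule.mem_top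
    exact one_ne_zero ((Submodule.mem_bot _).1 h1)
  | 1, F, hne, hcomm, hco, huni, hbot =>
    left
    have hF0 : F 0 = ⊥ := by
      have : List.ofFn F = [F 0] := by
        rw [List.ofFn_succ, List.ofFn_zero]
      rw [this] at hbot
      exact hbot.symm
    have := (uniserial_quot_iff (F 0)).1 (huni 0)
    rw [hF0] at this
    exact fun A B => this A B bot_le bot_le
  | (m+2), F, hne, hcomm, hco, huni, hbot =>
    right
    -- every F i is two-sided
    have hts : ∀ i, IsTwoSidedRid (F i) := by
      intro i
      obtain ⟨j, hj⟩ := exists_ne i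
      exact twoSided_of_comm (coindep_pair hco hj) (hcomm i j)
    have hiInf : (⨅ i, F i) = ⊥ := by
      rw [iInf_eq_rprod F hco hcomm]; exact hbot.symm
    set c : ∀ i : Fin (m+2), RingCon R := fun i => ridCon (F i) (hts i) with hc
    refine ⟨m+2, fun i => (c i).Quotient, fun i => inferInstance, ?_, ?_, ?_⟩
    · -- nontrivial
      intro i
      obtain ⟨x, hx⟩ : ∃ x, x ∉ F i := by
        by_contra hcon
        push_neg at hcon
        exact hne i (Submodule.eq_top_iff'.2 hcon)
      exact ⟨(c i).mk' x, 0, fun hh => hx ((ridCon_eq_zero (hts i)).1 hh)⟩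
    · -- duo and chain
      intro i
      constructor
      · -- duo
        intro D
        rcases eq_or_ne D ⊤ with rfl | hDne
        · intro r x _; trivial
        set π : R →+* (c i).Quotient := (c i).mk' with hπ
        have hπs : Function.Surjective π := ridCon_mk'_surjective (hts i)
        set C : Submodule Rᵐᵒᵖ R := ⨅ j, ⨅ (_ : j ≠ i), F j with hC
        set D'' : Submodule Rᵐᵒᵖ R := comapRid π D ⊓ C with hD''
        -- a unit decomposition 1 = a + cc
        obtain ⟨a, haF, cc, hcc, h1⟩ := Submodule.mem_sup.1
          ((hco i) ▸ Submodule.mem_top (x := (1:R)))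
        have hπcc : π cc = 1 := by
          have : π a = 0 := (ridCon_eq_zero (hts i)).2 haF
          have h1' : π a + π cc = 1 := by rw [← map_add, h1, map_one]
          rw [this, zero_add] at h1'
          exact h1'
        -- image of D'' under π is D
        have himg : ∀ t ∈ D, ∃ x ∈ D'', π x = t := by
          intro t ht
          obtain ⟨y, rfl⟩ := hπs t
          refine ⟨cc * y, Submodule.mem_inf.2 ⟨mem_comapRid.2 ?_, C.smul_mem (op y) hcc⟩, ?_⟩
          · rw [map_mul, hπcc, one_mul]
            exact ht
          · rw [map_mul, hπcc, one_mul]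
        -- D'' has a serial factorization
        obtain ⟨mm, B, hBne, hBcomm, hBco, hBuni, hBeq⟩ := h D''
        have hD''ne : D'' ≠ ⊤ := by
          intro hcon
          have h1C : (1:R) ∈ C := (hcon ▸ Submodule.mem_top (x := (1:R)) : (1:R) ∈ D'').2
          obtain ⟨j, hj⟩ := exists_ne i
          have : (1:R) ∈ F j := (iInf_le_of_le j (iInf_le _ hj) : C ≤ F j) h1C
          exact hne j (Submodule.eq_top_iff'.2 fun x => by
            simpa using (F j).smul_mem (op x) this)
        match mm, B, hBne, hBcomm, hBco, hBuni, hBeq with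
        | 0, B, hBne, hBcomm, hBco, hBuni, hBeq =>
          exfalso
          rw [List.ofFn_zero] at hBeq
          exact hD''ne hBeq
        | 1, B, hBne, hBcomm, hBco, hBuni, hBeq =>
          exfalso
          have hB0 : D'' = B 0 := by
            have : List.ofFn B = [B 0] := by rw [List.ofFn_succ, List.ofFn_zero]
            rw [this] at hBeq
            exact hBeq
          have huniD := (uniserial_quot_iff (B 0)).1 (hBuni 0)
          rw [← hB0] at huniD
          have hcomp := huniD (comapRid π D) C inf_le_left inf_le_right
          rcases hcomp with hle | hle
          · -- comapRid π D ≤ C is impossible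
            have hFi : F i ≤ comapRid π D := by
              intro x hx
              refine mem_comapRid.2 ?_
              rw [(ridCon_eq_zero (hts i)).2 hx]
              exact D.zero_mem
            obtain ⟨j, hj⟩ := exists_ne i
            have hFij : F i ≤ F j := (hFi.trans hle).trans (iInf_le_of_le j (iInf_le _ hj))
            have h2 := coindep_pair hco (Ne.symm hj)
            rw [sup_of_le_left hFij] at h2
            exact hne j h2
          · -- C ≤ comapRid π D is impossible
            have : (1:(c i).Quotient) ∈ D := by
              have h3 := mem_comapRid.1 (hle hcc)
              rwa [hπcc] at h3
            exact hDne (Submodule.eq_top_iff'.2 fun x => by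
              simpa using D.smul_mem (op x) this)
        | (mm+2), B, hBne, hBcomm, hBco, hBuni, hBeq =>
          -- all B k are two-sided, so D'' is two-sided, so D is two-sided
          have hBts : ∀ k, IsTwoSidedRid (B k) := by
            intro k
            obtain ⟨k', hk'⟩ := exists_ne k
            exact twoSided_of_comm (coindep_pair hBco hk') (hBcomm k k')
          have hD''ts : IsTwoSidedRid D'' := by
            rw [hBeq]
            refine twoSided_rprod _ fun A hA => ?_
            obtain ⟨k, rfl⟩ := List.mem_ofFn.1 hA
            exact hBts k
          intro s t ht
          obtain ⟨x, hxD'', hπx⟩ := himg t ht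
          obtain ⟨r, rfl⟩ := hπs s
          have h4 : r * x ∈ D'' := hD''ts r x hxD''
          have h5 : π (r * x) ∈ D := mem_comapRid.1 (Submodule.mem_inf.1 h4).1
          rwa [map_mul, hπx] at h5
      · -- chain
        intro T₁ T₂
        have hFi : ∀ T : Submodule ((c i).Quotient)ᵐᵒᵖ (c i).Quotient,
            F i ≤ comapRid (c i).mk' T := by
          intro T x hx
          refine mem_comapRid.2 ?_
          rw [(ridCon_eq_zero (hts i)).2 hx]
          exact T.zero_mem
        have := (uniserial_quot_iff (F i)).1 (huni i)
          (comapRid (c i).mk' T₁) (comapRid (c i).mk' T₂) (hFi T₁) (hFi T₂)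
        rcases this with hle | hle
        · exact Or.inl (le_of_comapRid_le (ridCon_mk'_surjective (hts i)) hle)
        · exact Or.inr (le_of_comapRid_le (ridCon_mk'_surjective (hts i)) hle)
    · -- the ring isomorphism
      refine ⟨RingEquiv.ofBijective (Pi.ringHom fun i => (c i).mk') ⟨?_, ?_⟩⟩
      · intro x y hxy
        have : ∀ i, x - y ∈ F i := by
          intro i
          exact (ridCon_eq (hts i)).1 (congrFun hxy i)
        have : x - y ∈ (⨅ i, F i) := Submodule.mem_iInf _ |>.2 this
        rw [hiInf] at this
        exact sub_eq_zero.1 this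
      · intro g
        have : ∀ i, ∃ x, (c i).mk' x = g i := fun i => ridCon_mk'_surjective (hts i) (g i)
        choose x hx using this
        obtain ⟨y, hy⟩ := crt_exists F hco x
        refine ⟨y, funext fun i => ?_⟩
        show (c i).mk' y = g i
        rw [← hx i]
        exact (ridCon_eq (hts i)).2 (hy i)

/-! ### chain case -/

theorem hasSerialFact_of_chain (hch : IsRightChainRing R) (A : Submodule Rᵐᵒᵖ R) :
    HasSerialFact A := by
  rcases eq_or_ne A ⊤ with rfl | hA
  · refine ⟨0, Fin.elim0, fun i => i.elim0, fun i => i.elim0, fun i => i.elim0,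
      fun i => i.elim0, ?_⟩
    rw [List.ofFn_zero]; rfl
  · refine ⟨1, fun _ => A, fun _ => hA, fun _ _ => rfl, ?_, ?_, ?_⟩
    · intro i
      have h1 : (⨅ j : Fin 1, ⨅ (_ : j ≠ i), A) = ⊤ :=
        top_unique (le_iInf fun j => le_iInf fun hj => absurd (Subsingleton.elim j i) hj)
      rw [h1, sup_top_eq]
    · intro i
      exact (uniserial_quot_iff A).2 fun P Q _ _ => hch P Q
    · rw [List.ofFn_succ, List.ofFn_zero]; rfl

/-! ### transfer along ring isos -/

section Transfer
variable {S : Type*} [Ring S]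

noncomputable def mapRid (e : R ≃+* S) (A : Submodule Rᵐᵒᵖ R) : Submodule Sᵐᵒᵖ S :=
  comapRid (e.symm : S →+* R) A

theorem mem_mapRid {e : R ≃+* S} {A : Submodule Rᵐᵒᵖ R} {x : S} :
    x ∈ mapRid e A ↔ e.symm x ∈ A := mem_comapRid

theorem mapRid_mapRid_symm (e : R ≃+* S) (B : Submodule Sᵐᵒᵖ S) :
    mapRid e (mapRid e.symm B) = B := by
  ext x
  rw [mem_mapRid, mem_mapRid]
  simp

theorem mapRid_symm_mapRid (e : R ≃+* S) (A : Submodule Rᵐᵒᵖ R) :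
    mapRid e.symm (mapRid e A) = A := by
  ext x
  rw [mem_mapRid, mem_mapRid]
  simp

theorem mapRid_mono {e : R ≃+* S} {A B : Submodule Rᵐᵒᵖ R} (h : A ≤ B) :
    mapRid e A ≤ mapRid e B := fun _ hx => mem_mapRid.2 (h (mem_mapRid.1 hx))

theorem mapRid_inj {e : R ≃+* S} {A B : Submodule Rᵐᵒᵖ R} (h : mapRid e A = mapRid e B) :
    A = B := by
  rw [← mapRid_symm_mapRid e A, h, mapRid_symm_mapRid]

theorem mapRid_top (e : R ≃+* S) : mapRid e (⊤ : Submodule Rᵐᵒᵖ R) = ⊤ :=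
  top_unique fun x _ => mem_mapRid.2 Submodule.mem_top

theorem mapRid_ne_top {e : R ≃+* S} {A : Submodule Rᵐᵒᵖ R} (h : A ≠ ⊤) : mapRid e A ≠ ⊤ := by
  intro hcon
  exact h (mapRid_inj (by rw [hcon, mapRid_top]))

theorem mapRid_sup (e : R ≃+* S) (A B : Submodule Rᵐᵒᵖ R) :
    mapRid e (A ⊔ B) = mapRid e A ⊔ mapRid e B := by
  refine le_antisymm ?_ (sup_le (mapRid_mono le_sup_left) (mapRid_mono le_sup_right))
  intro x hx
  obtain ⟨y, hy, z, hz, hyz⟩ := Submodule.mem_sup.1 (mem_mapRid.1 hx)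
  refine Submodule.mem_sup.2 ⟨e y, mem_mapRid.2 (by simpa using hy), e z,
    mem_mapRid.2 (by simpa using hz), ?_⟩
  rw [← map_add]
  rw [hyz]
  simp

theorem mapRid_iInf (e : R ≃+* S) {ι : Sort*} (f : ι → Submodule Rᵐᵒᵖ R) :
    mapRid e (⨅ i, f i) = ⨅ i, mapRid e (f i) := by
  ext x
  rw [mem_mapRid, Submodule.mem_iInf, Submodule.mem_iInf]
  exact ⟨fun h i => mem_mapRid.2 (h i), fun h i => mem_mapRid.1 (h i)⟩

theorem mapRid_rmul (e : R ≃+* S) (A B : Submodule Rᵐᵒᵖ R) :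
    mapRid e (rmul A B) = rmul (mapRid e A) (mapRid e B) := by
  refine le_antisymm ?_ (rmul_le fun a ha b hb => mem_mapRid.2 ?_)
  · intro x hx
    have hx' : e.symm x ∈ rmul A B := mem_mapRid.1 hx
    have : e (e.symm x) ∈ rmul (mapRid e A) (mapRid e B) := by
      refine rmul_induction (p := fun y => e y ∈ rmul (mapRid e A) (mapRid e B))
        ?_ ?_ ?_ _ hx'
      · intro a ha b hb
        rw [map_mul]
        exact mul_mem_rmul (mem_mapRid.2 (by simpa using ha)) (mem_mapRid.2 (by simpa using hb))
      · show e (0:R) ∈ rmul (mapRid e A) (mapRid e B)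
        rw [map_zero]; exact Submodule.zero_mem _
      · intro y z hy hz
        show e (y + z) ∈ rmul (mapRid e A) (mapRid e B)
        rw [map_add]; exact Submodule.add_mem _ hy hz
    simpa using this
  · rw [map_mul]
    exact mul_mem_rmul (mem_mapRid.1 ha) (mem_mapRid.1 hb)

theorem mapRid_rprod (e : R ≃+* S) : ∀ l : List (Submodule Rᵐᵒᵖ R),
    mapRid e (rprod l) = rprod (l.map (mapRid e))
  | [] => by rw [List.map_nil]; exact mapRid_top e
  | A :: l => by
    rw [List.map_cons, rprod_cons, rprod_cons, mapRid_rmul, mapRid_rprod e l]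

theorem hasSerialFact_congr (e : R ≃+* S)
    (h : ∀ A : Submodule Rᵐᵒᵖ R, HasSerialFact A) (B : Submodule Sᵐᵒᵖ S) : HasSerialFact B := by
  obtain ⟨n, F, h1, h2, h3, h4, h5⟩ := h (mapRid e.symm B)
  refine ⟨n, fun i => mapRid e (F i), fun i => mapRid_ne_top (h1 i), ?_, ?_, ?_, ?_⟩
  · intro i j
    rw [← mapRid_rmul, ← mapRid_rmul, h2 i j]
  · intro i
    have hiI : mapRid e (⨅ j, ⨅ (_ : j ≠ i), F j) = ⨅ j, ⨅ (_ : j ≠ i), mapRid e (F j) := by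
      rw [mapRid_iInf]
      exact iInf_congr fun j => mapRid_iInf e _
    show mapRid e (F i) ⊔ (⨅ j, ⨅ (_ : j ≠ i), mapRid e (F j)) = ⊤
    rw [← hiI, ← mapRid_sup, h3 i, mapRid_top]
  · intro i
    rw [uniserial_quot_iff]
    intro P Q hP hQ
    have hP' : F i ≤ mapRid e.symm P := by
      rw [← mapRid_symm_mapRid e (F i)]
      exact mapRid_mono hP
    have hQ' : F i ≤ mapRid e.symm Q := by
      rw [← mapRid_symm_mapRid e (F i)]
      exact mapRid_mono hQ
    rcases (uniserial_quot_iff (F i)).1 (h4 i) _ _ hP' hQ' with hle | hle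
    · left
      rw [← mapRid_mapRid_symm e P, ← mapRid_mapRid_symm e Q]
      exact mapRid_mono hle
    · right
      rw [← mapRid_mapRid_symm e P, ← mapRid_mapRid_symm e Q]
      exact mapRid_mono hle
  · rw [← mapRid_mapRid_symm e B, h5, mapRid_rprod, List.map_ofFn]
    rfl

end Transfer

section Pi
variable {k : ℕ} {S : Fin k → Type u} [inst : ∀ i, Ring (S i)]

/-- The `i`-th component of a right ideal of a product ring. -/
def comp (i : Fin k) (A : Submodule (∀ j, S j)ᵐᵒᵖ (∀ j, S j)) : Submodule (S i)ᵐᵒᵖ (S i) where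
  carrier := {x | Pi.single i x ∈ A}
  add_mem' := by
    intro a b ha hb
    show Pi.single i (a + b) ∈ A
    rw [Pi.single_add]
    exact A.add_mem ha hb
  zero_mem' := by
    show Pi.single i (0 : S i) ∈ A
    rw [Pi.single_zero]
    exact A.zero_mem
  smul_mem' := by
    intro r x hx
    show Pi.single i (x * r.unop) ∈ A
    have he : Pi.single i (x * r.unop) = Pi.single i x * Pi.single i r.unop :=
      (Pi.single_mul i x r.unop)
    rw [he]
    exact A.smul_mem (op (Pi.single i r.unop)) hx

theorem mem_comp {i : Fin k} {A : Submodule (∀ j, S j)ᵐᵒᵖ (∀ j, S j)} {x : S i} :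
    x ∈ comp i A ↔ Pi.single i x ∈ A := Iff.rfl

theorem mul_single_one (a : ∀ j, S j) (i : Fin k) :
    a * Pi.single i 1 = Pi.single i (a i) := by
  funext j
  rcases eq_or_ne j i with rfl | hj
  · simp
  · simp [Pi.single_eq_of_ne hj]

theorem mem_iff_comp {A : Submodule (∀ j, S j)ᵐᵒᵖ (∀ j, S j)} {a : ∀ j, S j} :
    a ∈ A ↔ ∀ i, a i ∈ comp i A := by
  constructor
  · intro ha i
    show Pi.single i (a i) ∈ A
    rw [← mul_single_one]
    exact A.smul_mem (op (Pi.single i 1)) ha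
  · intro h
    have : a = ∑ i, Pi.single i (a i) := (Finset.univ_sum_single a).symm
    rw [this]
    exact Submodule.sum_mem _ fun i _ => h i

/-- The right ideal of the product given by a condition in one coordinate. -/
def coordRid (i : Fin k) (T : Submodule (S i)ᵐᵒᵖ (S i)) :
    Submodule (∀ j, S j)ᵐᵒᵖ (∀ j, S j) where
  carrier := {a | a i ∈ T}
  add_mem' := fun ha hb => by
    show _ + _ ∈ T
    exact T.add_mem ha hb
  zero_mem' := T.zero_mem
  smul_mem' := by
    intro r a ha
    show (a * r.unop) i ∈ T
    exact T.smul_mem (op (r.unop i)) ha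

theorem mem_coordRid {i : Fin k} {T : Submodule (S i)ᵐᵒᵖ (S i)} {a : ∀ j, S j} :
    a ∈ coordRid i T ↔ a i ∈ T := Iff.rfl

theorem comp_coordRid_ne {i j : Fin k} (h : j ≠ i) (T : Submodule (S i)ᵐᵒᵖ (S i)) :
    comp j (coordRid i T) = ⊤ := by
  refine top_unique fun x _ => ?_
  show (Pi.single j x) i ∈ T
  rw [Pi.single_eq_of_ne (Ne.symm h)]
  exact T.zero_mem

theorem rmul_coordRid {i i' : Fin k} (h : i ≠ i')
    (T : Submodule (S i)ᵐᵒᵖ (S i)) (T' : Submodule (S i')ᵐᵒᵖ (S i'))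
    (hduo : IsRightDuo (S i')) :
    rmul (coordRid i T) (coordRid i' T') = coordRid i T ⊓ coordRid i' T' := by
  refine le_antisymm (rmul_le fun a ha b hb => ?_) ?_
  · refine Submodule.mem_inf.2 ⟨?_, ?_⟩
    · show (a * b) i ∈ T
      exact T.smul_mem (op (b i)) ha
    · show (a * b) i' ∈ T'
      exact hduo T' (a i') _ hb
  · rintro x hx
    obtain ⟨hxT, hxT'⟩ := Submodule.mem_inf.1 hx
    have hdec : x = x * (1 - Pi.single i' 1) + (1 - Pi.single i 1) * Pi.single i' (x i') := by
      have h1 : ((1 : ∀ j, S j) - Pi.single i 1) * Pi.single i' (x i') = Pi.single i' (x i') := by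
        funext j
        rcases eq_or_ne j i' with rfl | hj
        · show ((1 : ∀ j, S j) - Pi.single i 1 : ∀ j, S j) j * (Pi.single j (x j) : ∀ j, S j) j
              = (Pi.single j (x j) : ∀ j, S j) j
          rw [Pi.sub_apply, Pi.one_apply, Pi.single_eq_of_ne (Ne.symm h), sub_zero, one_mul]
        · show ((1 : ∀ j, S j) - Pi.single i 1 : ∀ j, S j) j * (Pi.single i' (x i') : ∀ j, S j) j
              = (Pi.single i' (x i') : ∀ j, S j) j
          rw [Pi.single_eq_of_ne hj, mul_zero]
      rw [h1, mul_sub, mul_one, mul_single_one, sub_add_cancel]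
    rw [hdec]
    refine Submodule.add_mem _ (mul_mem_rmul hxT ?_) (mul_mem_rmul ?_ ?_)
    · show ((1 : ∀ j, S j) - Pi.single i' 1 : ∀ j, S j) i' ∈ T'
      rw [Pi.sub_apply, Pi.one_apply, Pi.single_eq_same, sub_self]
      exact T'.zero_mem
    · show ((1 : ∀ j, S j) - Pi.single i 1 : ∀ j, S j) i ∈ T
      rw [Pi.sub_apply, Pi.one_apply, Pi.single_eq_same, sub_self]
      exact T.zero_mem
    · show (Pi.single i' (x i') : ∀ j, S j) i' ∈ T'
      rw [Pi.single_eq_same]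
      exact hxT'

theorem hasSerialFact_pi
    (hdc : ∀ i, IsRightDuo (S i) ∧ IsRightChainRing (S i))
    (A : Submodule (∀ j, S j)ᵐᵒᵖ (∀ j, S j)) : HasSerialFact A := by
  classical
  set Js : Finset (Fin k) := Finset.univ.filter (fun i => comp i A ≠ ⊤) with hJs
  set n := Js.card with hn
  set eqv : Fin n ≃ Js := Js.equivFin.symm with heqv
  set F : Fin n → Submodule (∀ j, S j)ᵐᵒᵖ (∀ j, S j) :=
    fun t => coordRid (eqv t : Fin k) (comp (eqv t : Fin k) A) with hF
  have heqv_ne : ∀ {t t' : Fin n}, t ≠ t' → ((eqv t : Fin k) ≠ (eqv t' : Fin k)) := by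
    intro t t' htt hcon
    exact htt (eqv.injective (Subtype.ext hcon))
  have hmemJs : ∀ t : Fin n, comp (eqv t : Fin k) A ≠ ⊤ := by
    intro t
    exact (Finset.mem_filter.1 (eqv t).2).2
  -- single i 1 belongs to F t' whenever i ≠ eqv t'
  have hsingle_mem : ∀ (i : Fin k) (t' : Fin n), i ≠ (eqv t' : Fin k) →
      Pi.single i (1 : S i) ∈ F t' := by
    intro i t' hne
    show (Pi.single i (1 : S i) : ∀ j, S j) (eqv t' : Fin k) ∈ comp _ A
    rw [Pi.single_eq_of_ne (Ne.symm hne)]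
    exact Submodule.zero_mem _
  have hcompl_mem : ∀ t : Fin n, (1 : ∀ j, S j) - Pi.single (eqv t : Fin k) 1 ∈ F t := by
    intro t
    show ((1 : ∀ j, S j) - Pi.single (eqv t : Fin k) 1 : ∀ j, S j) (eqv t : Fin k) ∈ comp _ A
    rw [Pi.sub_apply, Pi.one_apply, Pi.single_eq_same, sub_self]
    exact Submodule.zero_mem _
  have hcomm : ∀ t t', rmul (F t) (F t') = rmul (F t') (F t) := by
    intro t t'
    rcases eq_or_ne t t' with rfl | htt
    · rfl
    · rw [hF]
      rw [rmul_coordRid (heqv_ne htt) _ _ (hdc _).1,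
        rmul_coordRid (heqv_ne (Ne.symm htt)) _ _ (hdc _).1, inf_comm]
  have hco : Coindep F := by
    intro t
    rw [eq_top_iff]
    intro x _
    have hx : x = (x - x * Pi.single (eqv t : Fin k) 1) + x * Pi.single (eqv t : Fin k) 1 := by
      abel
    refine Submodule.mem_sup.2 ⟨x - x * Pi.single (eqv t : Fin k) 1, ?_,
      x * Pi.single (eqv t : Fin k) 1, ?_, by rw [← hx]⟩
    · show (x - x * Pi.single (eqv t : Fin k) 1 : ∀ j, S j) (eqv t : Fin k) ∈ comp _ A
      rw [mul_single_one, Pi.sub_apply, Pi.single_eq_same, sub_self]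
      exact Submodule.zero_mem _
    · refine Submodule.mem_iInf _ |>.2 fun t' => Submodule.mem_iInf _ |>.2 fun htt => ?_
      show (x * Pi.single (eqv t : Fin k) 1 : ∀ j, S j) (eqv t' : Fin k) ∈ comp _ A
      rw [mul_single_one, Pi.single_eq_of_ne (heqv_ne htt)]
      exact Submodule.zero_mem _
  have hne : ∀ t, F t ≠ ⊤ := by
    intro t hcon
    refine hmemJs t (top_unique fun x _ => ?_)
    have : Pi.single (eqv t : Fin k) x ∈ F t := hcon ▸ Submodule.mem_top
    have h2 : (Pi.single (eqv t : Fin k) x : ∀ j, S j) (eqv t : Fin k) ∈ comp (eqv t : Fin k) A := this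
    rwa [Pi.single_eq_same] at h2
  have hcompmono : ∀ (i : Fin k) (P Q : Submodule (∀ j, S j)ᵐᵒᵖ (∀ j, S j)), P ≤ Q →
      comp i P ≤ comp i Q := fun i P Q hPQ x hx => hPQ hx
  have huni : ∀ t, IsUniserialMod (∀ j, S j)ᵐᵒᵖ ((∀ j, S j) ⧸ F t) := by
    intro t
    rw [uniserial_quot_iff]
    intro P Q hP hQ
    have hPQ : ∀ (P Q : Submodule (∀ j, S j)ᵐᵒᵖ (∀ j, S j)), F t ≤ P → F t ≤ Q →
        comp (eqv t : Fin k) P ≤ comp (eqv t : Fin k) Q → P ≤ Q := by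
      intro P Q hP hQ hle x hx
      refine mem_iff_comp.2 fun j => ?_
      rcases eq_or_ne j (eqv t : Fin k) with rfl | hj
      · exact hle (mem_iff_comp.1 hx _)
      · have : comp j Q = ⊤ := top_unique
          ((comp_coordRid_ne hj (comp (eqv t : Fin k) A)).ge.trans (hcompmono j _ _ hQ))
        rw [this]
        trivial
    rcases (hdc (eqv t : Fin k)).2 (comp (eqv t : Fin k) P) (comp (eqv t : Fin k) Q) with hle | hle
    · exact Or.inl (hPQ P Q hP hQ hle)
    · exact Or.inr (hPQ Q P hQ hP hle)
  refine ⟨n, F, hne, hcomm, hco, huni, ?_⟩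
  rw [← iInf_eq_rprod F hco hcomm]
  ext x
  rw [Submodule.mem_iInf]
  constructor
  · intro hx t
    show x (eqv t : Fin k) ∈ comp (eqv t : Fin k) A
    exact mem_iff_comp.1 hx _
  · intro hx
    refine mem_iff_comp.2 fun i => ?_
    by_cases hi : comp i A = ⊤
    · rw [hi]; trivial
    · have hiJ : i ∈ Js := Finset.mem_filter.2 ⟨Finset.mem_univ i, hi⟩
      have hh : (eqv (eqv.symm ⟨i, hiJ⟩) : Fin k) = i := by
        rw [Equiv.apply_symm_apply]
      have h2 : x (eqv (eqv.symm ⟨i, hiJ⟩) : Fin k) ∈ comp (eqv (eqv.symm ⟨i, hiJ⟩) : Fin k) A :=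
        hx (eqv.symm ⟨i, hiJ⟩)
      exact hh ▸ h2
end Pi

end SF

/-- Proposition: every right ideal of `R` has a serial factorization iff `R` is a right
chain ring or `R` is (isomorphic to) a finite direct product of right duo right chain
rings. -/
theorem statement10 {R : Type u} [Ring R] [Nontrivial R] :
    (∀ A : Submodule Rᵐᵒᵖ R, HasSerialFact A) ↔
      (IsRightChainRing R ∨
        ∃ (k : ℕ) (S : Fin k → Type u) (inst : ∀ i, Ring (S i)),
          (∀ i, Nontrivial (S i)) ∧
          (∀ i, IsRightDuo (S i) ∧ IsRightChainRing (S i)) ∧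
          Nonempty (R ≃+* ((i : Fin k) → S i))) := by
  constructor
  · exact SF.forward
  · rintro (hch | ⟨k, S, inst, hnt, hdc, ⟨e⟩⟩) A
    · exact SF.hasSerialFact_of_chain hch A
    · letI := inst
      exact SF.hasSerialFact_congr e.symm (fun B => SF.hasSerialFact_pi hdc B) A
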